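/- Let G be a diamond-free graph containing an induced 5-cycle v1v2v3v4v5, and let F_i be the set of vertices outside the cycle whose neighbourhood on the cycle is exactly {v_i, v_{i-2}, v_{i+2}}. Then each F_i contains at most one vertex, and F = F_1 ∪ ... ∪ F_5 is a stable set. -/

import Mathlib

open SimpleGraph
def diamond : SimpleGraph (Fin 4) := (⊤ : SimpleGraph (Fin 4)).deleteEdges {s(0, 1)}

lemma mk_diamond {V : Type*} {G : SimpleGraph V} {a b c d : V}
    (hab : a ≠ b) (hnab : ¬ G.Adj a b)
    (hac : G.Adj a c) (had : G.Adj a d) (hbc : G.Adj b c)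
    (hbd : G.Adj b d) (hcd : G.Adj c d) : Nonempty (diamond ↪g G) := by
  have hca := hac.symm; have hda := had.symm
  have hcb := hbc.symm; have hdb := hbd.symm; have hdc := hcd.symm
  have nac := hac.ne; have nad := had.ne; have nbc := hbc.ne
  have nbd := hbd.ne; have ncd := hcd.ne
  have hnba : ¬ G.Adj b a := fun h => hnab h.symm
  refine ⟨⟨⟨![a,b,c,d], ?_⟩, ?_⟩⟩
  · intro i j h
    fin_cases i <;> fin_cases j <;> simp_all
  · intro i j
    change G.Adj (![a,b,c,d] i) (![a,b,c,d] j) ↔ _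
    fin_cases i <;> fin_cases j <;>
      simp_all [diamond, deleteEdges_adj, Sym2.eq, Sym2.rel_iff]

theorem stmt_12 {V : Type*} (G : SimpleGraph V)
    (hD : ¬ Nonempty (diamond ↪g G))
    (v : Fin 5 → V) (hv : Function.Injective v)
    (hC5 : ∀ i j, G.Adj (v i) (v j) ↔ j = i + 1 ∨ i = j + 1)
    (F : Fin 5 → Set V)
    (hF : ∀ i, F i = {u | u ∉ Set.range v ∧ ∀ j, G.Adj u (v j) ↔ (j = i ∨ j = i - 2 ∨ j = i + 2)}) :
    (∀ i, (F i).Subsingleton) ∧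
      (∀ i j, ∀ x ∈ F i, ∀ y ∈ F j, ¬ G.Adj x y) := by
  -- membership unpacking
  have mem : ∀ i x, x ∈ F i → x ∉ Set.range v ∧
      ∀ j, G.Adj x (v j) ↔ (j = i ∨ j = i - 2 ∨ j = i + 2) := by
    intro i x hx; rw [hF i] at hx; exact hx
  -- adjacency of a vertex of F i to cycle vertices
  have adjF : ∀ i x, x ∈ F i → ∀ k : Fin 5,
      (k = i ∨ k = i - 2 ∨ k = i + 2) → G.Adj x (v k) := by
    intro i x hx k hk; exact ((mem i x hx).2 k).2 hk
  have nadjF : ∀ i x, x ∈ F i → ∀ k : Fin 5,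
      ¬(k = i ∨ k = i - 2 ∨ k = i + 2) → ¬ G.Adj x (v k) := by
    intro i x hx k hk h; exact hk (((mem i x hx).2 k).1 h)
  have neF : ∀ i x, x ∈ F i → ∀ k : Fin 5, x ≠ v k := by
    intro i x hx k h; exact (mem i x hx).1 ⟨k, h.symm⟩
  -- subsingleton part, proved via the general "same F i" argument
  have key : ∀ i, ∀ x ∈ F i, ∀ y ∈ F i, x ≠ y → False := by
    intro i x hx y hy hne
    by_cases hadj : G.Adj x y
    · -- diamond on v i, v(i+2), x, y (missing edge v i -- v(i+2))
      have h1 : ∀ k : Fin 5, k ≠ k + 2 := by decide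
      have h2 : ∀ k : Fin 5, ¬(k + 2 = k + 1 ∨ k = (k + 2) + 1) := by decide
      have e1 : ∀ k : Fin 5, (k = k ∨ k = k - 2 ∨ k = k + 2) := by decide
      have e2 : ∀ k : Fin 5, (k + 2 = k ∨ k + 2 = k - 2 ∨ k + 2 = k + 2) := by decide
      exact hD (mk_diamond (fun h => h1 i (hv h))
        (fun h => h2 i ((hC5 i (i+2)).1 h))
        (adjF i x hx i (e1 i)).symm (adjF i y hy i (e1 i)).symm
        (adjF i x hx (i+2) (e2 i)).symm (adjF i y hy (i+2) (e2 i)).symm hadj)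
    · -- diamond on x, y, v(i-2), v(i+2)
      have e3 : ∀ k : Fin 5, (k - 2 = k ∨ k - 2 = k - 2 ∨ k - 2 = k + 2) := by decide
      have e2 : ∀ k : Fin 5, (k + 2 = k ∨ k + 2 = k - 2 ∨ k + 2 = k + 2) := by decide
      have c1 : ∀ k : Fin 5, (k + 2 = (k - 2) + 1 ∨ k - 2 = (k + 2) + 1) := by decide
      exact hD (mk_diamond hne hadj
        (adjF i x hx (i-2) (e3 i)) (adjF i x hx (i+2) (e2 i))
        (adjF i y hy (i-2) (e3 i)) (adjF i y hy (i+2) (e2 i))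
        ((hC5 (i-2) (i+2)).2 (c1 i)))
  constructor
  · intro i x hx y hy
    by_contra hne
    exact key i x hx y hy hne
  · intro i j x hx y hy hadj
    have hxy : x ≠ y := hadj.ne
    have hj : j = i ∨ j = i + 1 ∨ j = i + 2 ∨ j = i + 3 ∨ j = i + 4 := by
      omega
    rcases hj with rfl | rfl | rfl | rfl | rfl
    · exact key _ x hx y hy hxy
    · -- j = i + 1 : diamond on y, v(i+2), x, v(i+3); missing edge y -- v(i+2)
      have n1 : ∀ k : Fin 5, ¬(k + 2 = k + 1 ∨ k + 2 = (k+1) - 2 ∨ k + 2 = (k+1) + 2) := by decide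
      have e1 : ∀ k : Fin 5, (k + 3 = k + 1 ∨ k + 3 = (k+1) - 2 ∨ k + 3 = (k+1) + 2) := by decide
      have e2 : ∀ k : Fin 5, (k + 2 = k ∨ k + 2 = k - 2 ∨ k + 2 = k + 2) := by decide
      have e3 : ∀ k : Fin 5, (k + 3 = k ∨ k + 3 = k - 2 ∨ k + 3 = k + 2) := by decide
      have c1 : ∀ k : Fin 5, (k + 3 = (k + 2) + 1 ∨ k + 2 = (k + 3) + 1) := by decide
      exact hD (mk_diamond (neF _ y hy (i+2)) (nadjF _ y hy (i+2) (n1 i))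
        hadj.symm (adjF _ y hy (i+3) (e1 i))
        (adjF i x hx (i+2) (e2 i)).symm ((hC5 (i+2) (i+3)).2 (c1 i))
        (adjF i x hx (i+3) (e3 i)))
    · -- j = i + 2 : diamond on v i, v(i+2), x, y
      have h1 : ∀ k : Fin 5, k ≠ k + 2 := by decide
      have h2 : ∀ k : Fin 5, ¬(k + 2 = k + 1 ∨ k = (k + 2) + 1) := by decide
      have e1 : ∀ k : Fin 5, (k = k ∨ k = k - 2 ∨ k = k + 2) := by decide
      have e2 : ∀ k : Fin 5, (k + 2 = k ∨ k + 2 = k - 2 ∨ k + 2 = k + 2) := by decide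
      have e4 : ∀ k : Fin 5, (k = k + 2 ∨ k = (k+2) - 2 ∨ k = (k+2) + 2) := by decide
      have e5 : ∀ k : Fin 5, (k + 2 = k + 2 ∨ k + 2 = (k+2) - 2 ∨ k + 2 = (k+2) + 2) := by decide
      exact hD (mk_diamond (fun h => h1 i (hv h))
        (fun h => h2 i ((hC5 i (i+2)).1 h))
        (adjF i x hx i (e1 i)).symm (adjF _ y hy i (e4 i)).symm
        (adjF i x hx (i+2) (e2 i)).symm (adjF _ y hy (i+2) (e5 i)).symm hadj)
    · -- j = i + 3 : diamond on v i, v(i+3), x, y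
      have h1 : ∀ k : Fin 5, k ≠ k + 3 := by decide
      have h2 : ∀ k : Fin 5, ¬(k + 3 = k + 1 ∨ k = (k + 3) + 1) := by decide
      have e1 : ∀ k : Fin 5, (k = k ∨ k = k - 2 ∨ k = k + 2) := by decide
      have e3 : ∀ k : Fin 5, (k + 3 = k ∨ k + 3 = k - 2 ∨ k + 3 = k + 2) := by decide
      have e4 : ∀ k : Fin 5, (k = k + 3 ∨ k = (k+3) - 2 ∨ k = (k+3) + 2) := by decide
      have e5 : ∀ k : Fin 5, (k + 3 = k + 3 ∨ k + 3 = (k+3) - 2 ∨ k + 3 = (k+3) + 2) := by decide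
      exact hD (mk_diamond (fun h => h1 i (hv h))
        (fun h => h2 i ((hC5 i (i+3)).1 h))
        (adjF i x hx i (e1 i)).symm (adjF _ y hy i (e4 i)).symm
        (adjF i x hx (i+3) (e3 i)).symm (adjF _ y hy (i+3) (e5 i)).symm hadj)
    · -- j = i + 4 : diamond on x, v(i+1), y, v(i+2); missing edge x -- v(i+1)
      have n1 : ∀ k : Fin 5, ¬(k + 1 = k ∨ k + 1 = k - 2 ∨ k + 1 = k + 2) := by decide
      have e1 : ∀ k : Fin 5, (k + 2 = k ∨ k + 2 = k - 2 ∨ k + 2 = k + 2) := by decide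
      have e4 : ∀ k : Fin 5, (k + 1 = k + 4 ∨ k + 1 = (k+4) - 2 ∨ k + 1 = (k+4) + 2) := by decide
      have e5 : ∀ k : Fin 5, (k + 2 = k + 4 ∨ k + 2 = (k+4) - 2 ∨ k + 2 = (k+4) + 2) := by decide
      have c1 : ∀ k : Fin 5, (k + 2 = (k + 1) + 1 ∨ k + 1 = (k + 2) + 1) := by decide
      exact hD (mk_diamond (neF i x hx (i+1)) (nadjF i x hx (i+1) (n1 i))
        hadj (adjF i x hx (i+2) (e1 i))
        (adjF _ y hy (i+1) (e4 i)).symm ((hC5 (i+1) (i+2)).2 (c1 i))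
        (adjF _ y hy (i+2) (e5 i)))
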